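/- For a matrix Laurent series h(t) ∈ M_n(ℚ((t))), the following are equivalent: (a) h(t) = q(t)^{-1} p(t) for some matrix polynomials p, q ∈ M_n(ℚ[t]) with q Laurent invertible; (b) h(t) = r(t) s(t)^{-1} for some matrix polynomials r, s with s Laurent invertible; (c) every entry of h(t) lies in the field of rational functions ℚ(t). -/

import Mathlib

noncomputable def polyToLS : Polynomial ℚ →+* LaurentSeries ℚ :=
  (HahnSeries.ofPowerSeries ℤ ℚ).comp Polynomial.coeToPowerSeries.ringHom

lemma polyToLS_eq (p : Polynomial ℚ) :
    polyToLS p = (@algebraMap (RatFunc ℚ) (LaurentSeries ℚ) _ _ (RatFunc.liftAlgebra ℚ (LaurentSeries ℚ))) (algebraMap (Polynomial ℚ) (RatFunc ℚ) p) := by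
  have := RatFunc.coe_coe (F := ℚ) p
  exact this

lemma polyToLS_injective : Function.Injective polyToLS :=
  HahnSeries.ofPowerSeries_injective.comp (Polynomial.coe_injective (R := ℚ))

lemma mem_range_polyToLS (p : Polynomial ℚ) :
    polyToLS p ∈ Set.range ⇑(@algebraMap (RatFunc ℚ) (LaurentSeries ℚ) _ _ (RatFunc.liftAlgebra ℚ (LaurentSeries ℚ))) :=
  ⟨algebraMap _ _ p, (polyToLS_eq p).symm⟩

lemma inv_mem_range {x : LaurentSeries ℚ}
    (hx : x ∈ Set.range ⇑(@algebraMap (RatFunc ℚ) (LaurentSeries ℚ) _ _ (RatFunc.liftAlgebra ℚ (LaurentSeries ℚ)))) :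
    x⁻¹ ∈ Set.range ⇑(@algebraMap (RatFunc ℚ) (LaurentSeries ℚ) _ _ (RatFunc.liftAlgebra ℚ (LaurentSeries ℚ))) := by
  obtain ⟨f, rfl⟩ := hx
  exact ⟨f⁻¹, map_inv₀ (@algebraMap (RatFunc ℚ) (LaurentSeries ℚ) _ _ (RatFunc.liftAlgebra ℚ (LaurentSeries ℚ))) f⟩

lemma mul_mem_range {x y : LaurentSeries ℚ}
    (hx : x ∈ Set.range ⇑(@algebraMap (RatFunc ℚ) (LaurentSeries ℚ) _ _ (RatFunc.liftAlgebra ℚ (LaurentSeries ℚ))))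
    (hy : y ∈ Set.range ⇑(@algebraMap (RatFunc ℚ) (LaurentSeries ℚ) _ _ (RatFunc.liftAlgebra ℚ (LaurentSeries ℚ)))) :
    x * y ∈ Set.range ⇑(@algebraMap (RatFunc ℚ) (LaurentSeries ℚ) _ _ (RatFunc.liftAlgebra ℚ (LaurentSeries ℚ))) := by
  obtain ⟨f, rfl⟩ := hx; obtain ⟨g, rfl⟩ := hy
  exact ⟨f * g, map_mul _ _ _⟩

lemma sum_mem_range {ι : Type*} (s : Finset ι) (f : ι → LaurentSeries ℚ)
    (hf : ∀ i ∈ s, f i ∈ Set.range ⇑(@algebraMap (RatFunc ℚ) (LaurentSeries ℚ) _ _ (RatFunc.liftAlgebra ℚ (LaurentSeries ℚ)))) :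
    ∑ i ∈ s, f i ∈ Set.range ⇑(@algebraMap (RatFunc ℚ) (LaurentSeries ℚ) _ _ (RatFunc.liftAlgebra ℚ (LaurentSeries ℚ))) := by
  choose g hg using hf
  classical
  refine ⟨∑ i ∈ s.attach, g i i.2, ?_⟩
  rw [map_sum, ← Finset.sum_attach s f]
  exact Finset.sum_congr rfl fun i _ => hg i i.2

/-- Entries of the inverse of a matrix polynomial are rational. -/
lemma inv_entry_mem (n : ℕ) (q : Matrix (Fin n) (Fin n) (Polynomial ℚ)) (i j : Fin n) :
    (q.map ⇑polyToLS)⁻¹ i j ∈ Set.range ⇑(@algebraMap (RatFunc ℚ) (LaurentSeries ℚ) _ _ (RatFunc.liftAlgebra ℚ (LaurentSeries ℚ))) := by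
  have hdet : (q.map ⇑polyToLS).det = polyToLS q.det := by
    rw [← RingHom.mapMatrix_apply, ← RingHom.map_det]
  have hadj : (q.map ⇑polyToLS).adjugate = q.adjugate.map ⇑polyToLS := by
    rw [← RingHom.mapMatrix_apply, ← RingHom.mapMatrix_apply, ← RingHom.map_adjugate]
  rw [Matrix.inv_def, Ring.inverse_eq_inv, hdet, hadj, Matrix.smul_apply, Matrix.map_apply,
    smul_eq_mul]
  exact mul_mem_range (inv_mem_range (mem_range_polyToLS _)) (mem_range_polyToLS _)

lemma key_left (n : ℕ) (p q : Matrix (Fin n) (Fin n) (Polynomial ℚ)) (i j : Fin n) :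
    ((q.map ⇑polyToLS)⁻¹ * p.map ⇑polyToLS) i j ∈ Set.range ⇑(@algebraMap (RatFunc ℚ) (LaurentSeries ℚ) _ _ (RatFunc.liftAlgebra ℚ (LaurentSeries ℚ))) := by
  rw [Matrix.mul_apply]
  exact sum_mem_range _ _ fun k _ =>
    mul_mem_range (inv_entry_mem n q i k) (mem_range_polyToLS _)

lemma key_right (n : ℕ) (r s : Matrix (Fin n) (Fin n) (Polynomial ℚ)) (i j : Fin n) :
    (r.map ⇑polyToLS * (s.map ⇑polyToLS)⁻¹) i j ∈ Set.range ⇑(@algebraMap (RatFunc ℚ) (LaurentSeries ℚ) _ _ (RatFunc.liftAlgebra ℚ (LaurentSeries ℚ))) := by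
  rw [Matrix.mul_apply]
  exact sum_mem_range _ _ fun k _ =>
    mul_mem_range (mem_range_polyToLS _) (inv_entry_mem n s k j)

/-- Common-denominator construction. -/
lemma common_denom (n : ℕ) (h : Matrix (Fin n) (Fin n) (LaurentSeries ℚ))
    (hr : ∀ i j, h i j ∈ Set.range ⇑(@algebraMap (RatFunc ℚ) (LaurentSeries ℚ) _ _ (RatFunc.liftAlgebra ℚ (LaurentSeries ℚ)))) :
    ∃ (p : Matrix (Fin n) (Fin n) (Polynomial ℚ)) (b : Polynomial ℚ), b ≠ 0 ∧
      ∀ i j, polyToLS (p i j) = polyToLS b * h i j := by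
  choose f hf using fun i j => hr i j
  obtain ⟨b, hb⟩ := IsLocalization.exist_integer_multiples_of_finite
    (nonZeroDivisors (Polynomial ℚ)) (fun ij : Fin n × Fin n => f ij.1 ij.2)
  choose a ha using hb
  refine ⟨fun i j => a (i, j), b, nonZeroDivisors.ne_zero b.2, fun i j => ?_⟩
  have := ha (i, j)
  rw [Algebra.smul_def] at this
  have h2 := congrArg (@algebraMap (RatFunc ℚ) (LaurentSeries ℚ) _ _ (RatFunc.liftAlgebra ℚ (LaurentSeries ℚ))) this
  rw [map_mul, hf] at h2
  rw [polyToLS_eq, polyToLS_eq, h2]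

theorem matrix_laurent_series_rational_tfae (n : ℕ)
    (h : Matrix (Fin n) (Fin n) (LaurentSeries ℚ)) :
    ((∃ p q : Matrix (Fin n) (Fin n) (Polynomial ℚ),
        IsUnit (q.map ⇑polyToLS) ∧ h = (q.map ⇑polyToLS)⁻¹ * p.map ⇑polyToLS) ↔
      (∀ i j, h i j ∈ Set.range ⇑(@algebraMap (RatFunc ℚ) (LaurentSeries ℚ) _ _ (RatFunc.liftAlgebra ℚ (LaurentSeries ℚ))))) ∧
    ((∃ r s : Matrix (Fin n) (Fin n) (Polynomial ℚ),
        IsUnit (s.map ⇑polyToLS) ∧ h = r.map ⇑polyToLS * (s.map ⇑polyToLS)⁻¹) ↔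
      (∀ i j, h i j ∈ Set.range ⇑(@algebraMap (RatFunc ℚ) (LaurentSeries ℚ) _ _ (RatFunc.liftAlgebra ℚ (LaurentSeries ℚ))))) := by
  constructor
  · constructor
    · rintro ⟨p, q, hq, rfl⟩ i j
      exact key_left n p q i j
    · intro hr
      obtain ⟨p, b, hb, hpb⟩ := common_denom n h hr
      set Q : Matrix (Fin n) (Fin n) (Polynomial ℚ) := Matrix.diagonal (fun _ => b) with hQ
      have hQmap : Q.map ⇑polyToLS = Matrix.diagonal (fun _ => polyToLS b) := by
        rw [hQ, Matrix.diagonal_map (map_zero _)]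
      have hbne : (polyToLS b) ≠ 0 := by
        intro h0; exact hb (polyToLS_injective (by rw [h0, map_zero]))
      have hdet : IsUnit (Q.map ⇑polyToLS).det := by
        rw [hQmap, Matrix.det_diagonal, Finset.prod_const]
        exact (isUnit_iff_ne_zero.mpr hbne).pow _
      refine ⟨p, Q, (Matrix.isUnit_iff_isUnit_det _).mpr hdet, ?_⟩
      have hmul : Q.map ⇑polyToLS * h = p.map ⇑polyToLS := by
        ext i j
        rw [hQmap, Matrix.diagonal_mul, Matrix.map_apply, hpb]
      rw [← hmul, Matrix.nonsing_inv_mul_cancel_left _ _ hdet]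
  · constructor
    · rintro ⟨r, s, hs, rfl⟩ i j
      exact key_right n r s i j
    · intro hr
      obtain ⟨p, b, hb, hpb⟩ := common_denom n h hr
      set Q : Matrix (Fin n) (Fin n) (Polynomial ℚ) := Matrix.diagonal (fun _ => b) with hQ
      have hQmap : Q.map ⇑polyToLS = Matrix.diagonal (fun _ => polyToLS b) := by
        rw [hQ, Matrix.diagonal_map (map_zero _)]
      have hbne : (polyToLS b) ≠ 0 := by
        intro h0; exact hb (polyToLS_injective (by rw [h0, map_zero]))
      have hdet : IsUnit (Q.map ⇑polyToLS).det := by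
        rw [hQmap, Matrix.det_diagonal, Finset.prod_const]
        exact (isUnit_iff_ne_zero.mpr hbne).pow _
      refine ⟨p, Q, (Matrix.isUnit_iff_isUnit_det _).mpr hdet, ?_⟩
      have hmul : h * Q.map ⇑polyToLS = p.map ⇑polyToLS := by
        ext i j
        rw [hQmap, Matrix.mul_diagonal, Matrix.map_apply, hpb, mul_comm]
      rw [← hmul, Matrix.mul_nonsing_inv_cancel_right _ _ hdet]
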